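/- Let d ≥ 1, let p, c, v, w ∈ ℝ^d and B_X, M ∈ ℝ^{d×d}, and suppose the (d+1)×(d+1) real block matrices A = [[1, −pᵀ],[−c, Id − B_X]] and N = [[1, vᵀ],[w, M]] satisfy A·N = Id and N·A = Id. Let D ∈ ℝ^{d×d} be a diagonal matrix with strictly positive diagonal entries and let v₀ > 0. Then the matrix v₀ w wᵀ + M D Mᵀ is invertible and p + (v₀ w wᵀ + M D Mᵀ)^{−1} w v₀ = p + ((Id − B_X)ᵀ − p cᵀ) D^{−1} c · (1 − (v₀ cᵀ D^{−1} c)/(1 + v₀ cᵀ D^{−1} c)) · v₀. -/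

import Mathlib

open Matrix

/-- Central matrix identity in the proof of the Lemma on OLS in linear SCMs:
`p + (v₀ w wᵀ + M D Mᵀ)⁻¹ w v₀ = p + ((Id − B_X)ᵀ − p cᵀ) D⁻¹ c (1 − v₀cᵀD⁻¹c/(1+v₀cᵀD⁻¹c)) v₀`. -/
theorem ols_matrix_identity {d : ℕ} (hd : 1 ≤ d)
    (p c v w : Fin d → ℝ) (B_X M : Matrix (Fin d) (Fin d) ℝ)
    (hAN : fromBlocks (1 : Matrix (Fin 1) (Fin 1) ℝ) (-replicateRow (Fin 1) p) (-replicateCol (Fin 1) c)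
          ((1 : Matrix (Fin d) (Fin d) ℝ) - B_X) *
        fromBlocks (1 : Matrix (Fin 1) (Fin 1) ℝ) (replicateRow (Fin 1) v) (replicateCol (Fin 1) w) M = 1)
    (hNA : fromBlocks (1 : Matrix (Fin 1) (Fin 1) ℝ) (replicateRow (Fin 1) v) (replicateCol (Fin 1) w) M *
        fromBlocks (1 : Matrix (Fin 1) (Fin 1) ℝ) (-replicateRow (Fin 1) p) (-replicateCol (Fin 1) c)
          ((1 : Matrix (Fin d) (Fin d) ℝ) - B_X) = 1)
    (dv : Fin d → ℝ) (hdv : ∀ k, 0 < dv k) (D : Matrix (Fin d) (Fin d) ℝ)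
    (hD : D = diagonal dv) (v₀ : ℝ) (hv₀ : 0 < v₀) :
    IsUnit (v₀ • vecMulVec w w + M * D * Mᵀ).det ∧
    p + (v₀ • vecMulVec w w + M * D * Mᵀ)⁻¹ *ᵥ (v₀ • w) =
      p + ((1 - (v₀ * (c ⬝ᵥ (D⁻¹ *ᵥ c))) / (1 + v₀ * (c ⬝ᵥ (D⁻¹ *ᵥ c)))) * v₀) •
        ((((1 : Matrix (Fin d) (Fin d) ℝ) - B_X)ᵀ - vecMulVec p c) *ᵥ (D⁻¹ *ᵥ c)) := by
  -- extract block equations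
  rw [fromBlocks_multiply, ← fromBlocks_one] at hAN hNA
  have h12 := congrArg Matrix.toBlocks₁₂ hAN
  have h22 := congrArg Matrix.toBlocks₂₂ hAN
  have g21 := congrArg Matrix.toBlocks₂₁ hNA
  have g22 := congrArg Matrix.toBlocks₂₂ hNA
  simp only [toBlocks_fromBlocks₁₂, toBlocks_fromBlocks₂₁, toBlocks_fromBlocks₂₂,
    Matrix.one_mul, Matrix.mul_one, Matrix.neg_mul, Matrix.mul_neg] at h12 h22 g21 g22
  have hpM : replicateRow (Fin 1) p * M = replicateRow (Fin 1) v := by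
    rw [← sub_eq_add_neg, sub_eq_zero] at h12; exact h12.symm
  have hMc : M * replicateCol (Fin 1) c = replicateCol (Fin 1) w := by
    rw [← sub_eq_add_neg, sub_eq_zero] at g21; exact g21.symm
  have hBM : (1 - B_X) * M = 1 + replicateCol (Fin 1) c * replicateRow (Fin 1) v := by
    rw [neg_add_eq_sub, sub_eq_iff_eq_add] at h22; exact h22
  have hMB : M * (1 - B_X) = 1 + replicateCol (Fin 1) w * replicateRow (Fin 1) p := by
    rw [neg_add_eq_sub, sub_eq_iff_eq_add] at g22; exact g22
  -- E is the two sided inverse of M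
  set E : Matrix (Fin d) (Fin d) ℝ := (1 - B_X) - vecMulVec c p with hE
  have hvmv : ∀ x y : Fin d → ℝ, vecMulVec x y = replicateCol (Fin 1) x * replicateRow (Fin 1) y :=
    fun x y => vecMulVec_eq (Fin 1) x y
  have hME : M * E = 1 := by
    rw [hE, hvmv, mul_sub, hMB, ← Matrix.mul_assoc, hMc]
    abel
  have hEM : E * M = 1 := by
    rw [hE, hvmv, sub_mul, hBM, Matrix.mul_assoc, hpM]
    abel
  -- D facts
  have hdvne : ∀ k, dv k ≠ 0 := fun k => (hdv k).ne'
  have hDdiaginv : D * diagonal (fun k => (dv k)⁻¹) = 1 := by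
    rw [hD, diagonal_mul_diagonal, ← diagonal_one]
    exact congrArg diagonal (funext fun k => mul_inv_cancel₀ (hdvne k))
  have hDinv : D⁻¹ = diagonal (fun k => (dv k)⁻¹) := inv_eq_right_inv hDdiaginv
  have hDD : D * D⁻¹ = 1 := by rw [hDinv]; exact hDdiaginv
  set u : Fin d → ℝ := D⁻¹ *ᵥ c with hu
  set γ : ℝ := c ⬝ᵥ u with hγ
  have huk : ∀ k, u k = (dv k)⁻¹ * c k := by
    intro k; rw [hu, hDinv, mulVec_diagonal]
  have hγ0 : 0 ≤ γ := by
    rw [hγ, dotProduct]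
    apply Finset.sum_nonneg
    intro k _
    rw [huk k, show c k * ((dv k)⁻¹ * c k) = c k ^ 2 * (dv k)⁻¹ by ring]
    have := (hdv k).le
    positivity
  have h1γ : (0:ℝ) < 1 + v₀ * γ := by positivity
  have h1γne : (1 + v₀ * γ) ≠ 0 := h1γ.ne'
  have hDu : D *ᵥ u = c := by
    rw [hu, mulVec_mulVec, hDD, one_mulVec]
  -- inverse of K = D + v₀ • c cᵀ  (Sherman–Morrison)
  set K : Matrix (Fin d) (Fin d) ℝ := D + v₀ • vecMulVec c c with hKdef
  set Kinv : Matrix (Fin d) (Fin d) ℝ := D⁻¹ - (v₀ / (1 + v₀ * γ)) • vecMulVec u u with hKinv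
  have hcD : vecMulVec c c * D⁻¹ = vecMulVec c u := by
    ext i j
    rw [mul_apply, Finset.sum_eq_single j]
    · rw [vecMulVec_apply, vecMulVec_apply, hDinv, diagonal_apply_eq, huk j]; ring
    · intro b _ hb; rw [hDinv, diagonal_apply_ne _ hb, mul_zero]
    · simp
  have hDuu : D * vecMulVec u u = vecMulVec c u := by
    ext i j
    rw [mul_apply, Finset.sum_eq_single i]
    · rw [vecMulVec_apply, vecMulVec_apply, hD, diagonal_apply_eq, huk i]
      field_simp
      rw [mul_assoc]; exact mul_div_cancel_left₀ _ (hdvne i)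
    · intro b _ hb; rw [hD, diagonal_apply_ne _ (Ne.symm hb), zero_mul]
    · simp
  have hccuu : vecMulVec c c * vecMulVec u u = γ • vecMulVec c u := by
    ext i j
    simp only [mul_apply, vecMulVec_apply, Matrix.smul_apply, smul_eq_mul, hγ, dotProduct,
      Finset.sum_mul]
    exact Finset.sum_congr rfl fun k _ => by ring
  have hKK : K * Kinv = 1 := by
    rw [hKdef, hKinv, mul_sub, add_mul, add_mul, hDD, smul_mul_assoc, hcD,
      mul_smul_comm, hDuu, smul_mul_assoc, mul_smul_comm, hccuu, smul_smul, smul_smul]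
    match_scalars <;> field_simp <;> ring
  -- S = M K Mᵀ
  set S : Matrix (Fin d) (Fin d) ℝ := v₀ • vecMulVec w w + M * D * Mᵀ with hSdef
  have hrw : replicateRow (Fin 1) c * Mᵀ = replicateRow (Fin 1) w := by
    rw [← transpose_replicateCol w, ← hMc, transpose_mul, transpose_replicateCol]
  have hww : vecMulVec w w = M * vecMulVec c c * Mᵀ := by
    rw [hvmv w w, hvmv c c, ← hMc, ← hrw]
    simp only [Matrix.mul_assoc]
  have hS : S = M * K * Mᵀ := by
    rw [hSdef, hKdef, hww, mul_add, add_mul, mul_smul_comm, smul_mul_assoc]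
    abel
  have hSright : S * (Eᵀ * Kinv * E) = 1 := by
    rw [hS]
    calc M * K * Mᵀ * (Eᵀ * Kinv * E)
        = M * K * (Mᵀ * Eᵀ) * Kinv * E := by noncomm_ring
      _ = M * (K * Kinv) * E := by
          rw [← transpose_mul, hEM, transpose_one, Matrix.mul_one,
            Matrix.mul_assoc M K Kinv, ← Matrix.mul_assoc]
      _ = 1 := by rw [hKK, Matrix.mul_one, hME]
  refine ⟨isUnit_det_of_right_inverse hSright, ?_⟩
  have hSinv : S⁻¹ = Eᵀ * Kinv * E := inv_eq_right_inv hSright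
  -- vector computations
  have hMcv : M *ᵥ c = w := by
    funext k
    have := congrFun (congrFun hMc k) 0
    rw [← replicateCol_mulVec] at this
    exact this
  have hEw : E *ᵥ w = c := by
    rw [← hMcv, mulVec_mulVec, hEM, one_mulVec]
  have huuc : vecMulVec u u *ᵥ c = γ • u := by
    funext i
    simp only [mulVec, dotProduct, vecMulVec_apply, Pi.smul_apply, smul_eq_mul, hγ,
      dotProduct, Finset.sum_mul]
    exact Finset.sum_congr rfl fun k _ => by ring
  have hKinvc : Kinv *ᵥ c = (1 - v₀ * γ / (1 + v₀ * γ)) • u := by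
    rw [hKinv, sub_mulVec, smul_mulVec, huuc, ← hu, smul_smul, sub_smul, one_smul]
    congr 2
    ring
  have hET : Eᵀ = ((1 : Matrix (Fin d) (Fin d) ℝ) - B_X)ᵀ - vecMulVec p c := by
    rw [hE, transpose_sub]
    congr 1
    ext i j
    simp [vecMulVec_apply, mul_comm]
  congr 1
  rw [hSinv, mulVec_smul, ← mulVec_mulVec, ← mulVec_mulVec, hEw, hKinvc, mulVec_smul,
    ← hET, smul_smul, mul_comm v₀]
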